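/- For Laufer's polynomial f = x² + y³ + wz² + w^(2n+1)y (n ≥ 1 an integer) in ℂ[w,x,y,z], the 4×4 matrices Ψ = [[x, y, z, wⁿ], [−y², x, −ywⁿ, z], [−wz, w^(n+1), x, −y], [−yw^(n+1), −wz, y², x]] and Φ = [[x, −y, −z, −wⁿ], [y², x, ywⁿ, −z], [wz, −w^(n+1), x, y], [yw^(n+1), wz, −y², x]] satisfy ΨΦ = ΦΨ = f·I₄. -/
import Mathlib


open MvPolynomial

noncomputable section

abbrev S5 : Type := MvPolynomial (Fin 4) ℂ

def w5 : S5 := X 0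
def x5 : S5 := X 1
def y5 : S5 := X 2
def z5 : S5 := X 3

def fL (n : ℕ) : S5 := x5^2 + y5^3 + w5*z5^2 + w5^(2*n+1)*y5

def PsiL (n : ℕ) : Matrix (Fin 4) (Fin 4) S5 :=
  !![x5, y5, z5, w5^n;
     -y5^2, x5, -y5*w5^n, z5;
     -w5*z5, w5^(n+1), x5, -y5;
     -y5*w5^(n+1), -w5*z5, y5^2, x5]

def PhiL (n : ℕ) : Matrix (Fin 4) (Fin 4) S5 :=
  !![x5, -y5, -z5, -w5^n;
     y5^2, x5, y5*w5^n, -z5;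
     w5*z5, -w5^(n+1), x5, y5;
     y5*w5^(n+1), w5*z5, -y5^2, x5]

set_option maxHeartbeats 4000000 in
theorem laufer_matrix_factorization (n : ℕ) (hn : 1 ≤ n) :
    PsiL n * PhiL n = fL n • (1 : Matrix (Fin 4) (Fin 4) S5) ∧
    PhiL n * PsiL n = fL n • (1 : Matrix (Fin 4) (Fin 4) S5) := by
  refine ⟨Matrix.ext fun i j => ?_, Matrix.ext fun i j => ?_⟩ <;>
    fin_cases i <;> fin_cases j <;>
    · simp [Matrix.mul_apply, Fin.sum_univ_four, PsiL, PhiL, fL, Matrix.one_apply,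
        Matrix.smul_apply, smul_eq_mul]
      ring

end
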